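/- For every tiling instance T=(T,H,V,t0), there exists a proper tiling of T over ℕ×ℕ if and only if the EBBA formula α_T (the conjunction of α0, αH, αV, αHs, αVs, φH, φV and ψ defined in the context) is satisfiable in an increasing domain model. -/

import Mathlib

set_option maxHeartbeats 1000000

/-! ## Syntax of first-order modal logic (FOML)

Predicate symbols and variables are represented by natural numbers; an atom
`atom p args` applies the predicate symbol `p` to the list of variables `args`
(the arity of `p` in this occurrence is the length of `args`). -/
inductive Formula : Type where
  | atom (p : ℕ) (args : List ℕ)
  | neg  (φ : Formula)
  | and  (φ ψ : Formula)
  | or   (φ ψ : Formula)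
  | box  (φ : Formula)
  | dia  (φ : Formula)
  | ex   (x : ℕ) (φ : Formula)
  | all  (x : ℕ) (φ : Formula)
deriving DecidableEq

namespace Formula

def imp (φ ψ : Formula) : Formula := .or φ.neg ψ
def biimp (φ ψ : Formula) : Formula := .and (imp φ ψ) (imp ψ φ)
/-- a fixed tautology `⊤` -/
def top : Formula := .or (.atom 0 []) (.neg (.atom 0 []))
/-- a fixed contradiction `⊥` -/
def bot : Formula := .and (.atom 0 []) (.neg (.atom 0 []))

end Formula

def bigAnd (l : List Formula) : Formula := l.foldr Formula.and Formula.top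
def bigOr  (l : List Formula) : Formula := l.foldr Formula.or Formula.bot

/-! ## Semantics: Kripke structures with world-relative domains -/

structure Model where
  W : Type
  D : Type
  R : W → W → Prop
  dom : W → Set D
  ρ : W → ℕ → Set (List D)

/-- `M` is an increasing domain model: nonempty countable set of worlds, nonempty
countable domain, nonempty local domains that increase along the accessibility
relation, and interpretations of predicates at a world take values in the local
domain of that world. -/
def Model.Increasing (M : Model) : Prop :=
  Nonempty M.W ∧ Nonempty M.D ∧ Countable M.W ∧ Countable M.D ∧
    (∀ w, (M.dom w).Nonempty) ∧
    (∀ w v, M.R w v → M.dom w ⊆ M.dom v) ∧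
    (∀ w p l, l ∈ M.ρ w p → ∀ d ∈ l, d ∈ M.dom w)

def Model.sat (M : Model) : M.W → (ℕ → M.D) → Formula → Prop
  | w, σ, .atom p args => args.map σ ∈ M.ρ w p
  | w, σ, .neg φ => ¬ M.sat w σ φ
  | w, σ, .and φ ψ => M.sat w σ φ ∧ M.sat w σ ψ
  | w, σ, .or φ ψ => M.sat w σ φ ∨ M.sat w σ ψ
  | w, σ, .box φ => ∀ v, M.R w v → M.sat v σ φ
  | w, σ, .dia φ => ∃ v, M.R w v ∧ M.sat v σ φ
  | w, σ, .ex x φ => ∃ d ∈ M.dom w, M.sat w (Function.update σ x d) φ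
  | w, σ, .all x φ => ∀ d ∈ M.dom w, M.sat w (Function.update σ x d) φ

/-- the assignment `σ` is relevant at the world `w` -/
def Model.relevant (M : Model) (w : M.W) (σ : ℕ → M.D) : Prop := ∀ x, σ x ∈ M.dom w

/-- satisfiability over increasing domain models -/
def Satisfiable (φ : Formula) : Prop :=
  ∃ (M : Model), M.Increasing ∧ ∃ (w : M.W) (σ : ℕ → M.D), M.relevant w σ ∧ M.sat w σ φ

/-! ## Tiling problems and the encoding of a tiling instance -/

/-- A tiling instance `(T, H, V, t0)`: the tiles are `Fin numTiles`, with
horizontal constraints `H`, vertical constraints `V` and initial tile `t0`. -/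
structure TilingInstance where
  numTiles : ℕ
  t0 : Fin numTiles
  H : Finset (Fin numTiles × Fin numTiles)
  V : Finset (Fin numTiles × Fin numTiles)

/-- a proper tiling of the quadrant `ℕ × ℕ` -/
def ProperTiling (T : TilingInstance) (f : ℕ → ℕ → Fin T.numTiles) : Prop :=
  f 0 0 = T.t0 ∧
    (∀ i j, (f i j, f (i + 1) j) ∈ T.H) ∧
    (∀ i j, (f i j, f i (j + 1)) ∈ T.V)

/-- the binary predicate `P` (horizontal successor) -/
def atomP (x y : ℕ) : Formula := .atom 0 [x, y]
/-- the binary predicate `Q` (vertical successor) -/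
def atomQ (x y : ℕ) : Formula := .atom 1 [x, y]
/-- the unary predicate for tile `t` -/
def tileAt (m : ℕ) (t : Fin m) (x : ℕ) : Formula := .atom (2 + (t : ℕ)) [x]

/-- `OnlyT(t,x)`: `x` is tiled with `t` and with no other tile -/
def OnlyT (m : ℕ) (t : Fin m) (x : ℕ) : Formula :=
  .and (tileAt m t x)
    (bigAnd (((List.finRange m).filter (fun t' => decide (t' ≠ t))).map
      fun t' => .neg (tileAt m t' x)))

/-- `Hsuc(x,y)`: if `P(x,y)` then the tiles of `x` and `y` satisfy a horizontal constraint -/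
noncomputable def Hsuc (T : TilingInstance) (x y : ℕ) : Formula :=
  (atomP x y).imp
    (bigOr (T.H.toList.map fun p => .and (tileAt T.numTiles p.1 x) (tileAt T.numTiles p.2 y)))

/-- `Vsuc(x,y)`: if `Q(x,y)` then the tiles of `x` and `y` satisfy a vertical constraint -/
noncomputable def Vsuc (T : TilingInstance) (x y : ℕ) : Formula :=
  (atomQ x y).imp
    (bigOr (T.V.toList.map fun p => .and (tileAt T.numTiles p.1 x) (tileAt T.numTiles p.2 y)))

/-- `Δ⁰ := ⊤` and `Δⁿ := ◇⊤ ∧ □Δⁿ⁻¹` -/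
def delta : ℕ → Formula
  | 0 => .top
  | n + 1 => .and (.dia .top) (.box (delta n))
/-- The `EBBA` fragment: atomic formulas, negation, conjunction (and
disjunction), `□α`, `◇α`, and the bundles `∃x□α` and `□∀xα` together with
their duals `∀x◇α` and `◇∃xα`. -/
inductive EBBA : Formula → Prop where
  | atom (p : ℕ) (args : List ℕ) : EBBA (.atom p args)
  | neg {φ : Formula} : EBBA φ → EBBA (.neg φ)
  | and {φ ψ : Formula} : EBBA φ → EBBA ψ → EBBA (.and φ ψ)
  | or {φ ψ : Formula} : EBBA φ → EBBA ψ → EBBA (.or φ ψ)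
  | box {φ : Formula} : EBBA φ → EBBA (.box φ)
  | dia {φ : Formula} : EBBA φ → EBBA (.dia φ)
  | exBox {x : ℕ} {φ : Formula} : EBBA φ → EBBA (.ex x (.box φ))
  | allDia {x : ℕ} {φ : Formula} : EBBA φ → EBBA (.all x (.dia φ))
  | boxAll {x : ℕ} {φ : Formula} : EBBA φ → EBBA (.box (.all x φ))
  | diaEx {x : ℕ} {φ : Formula} : EBBA φ → EBBA (.dia (.ex x φ))

/-! ## The EBBA encoding of a tiling instance

Variables: `x0 := 0`, `x := 1`, `y := 2`, `z := 3`, `z' := 4`, `x1 := 5`, `x2 := 6`. -/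

/-- `α0 := ◇∃x0(□□OnlyT(t0,x0)) ∧ □∀x(⋁_{t∈T}□□OnlyT(t,x)) ∧ Δ³` -/
noncomputable def alpha0 (T : TilingInstance) : Formula :=
  .and (.dia (.ex 0 (.box (.box (OnlyT T.numTiles T.t0 0)))))
    (.and (.box (.all 1 (bigOr ((List.finRange T.numTiles).map
        fun t => .box (.box (OnlyT T.numTiles t 1))))))
      (delta 3))

/-- `αH := □∀x ∃x1 □□P(x,x1)` -/
def alphaH : Formula := .box (.all 1 (.ex 5 (.box (.box (atomP 1 5)))))

/-- `αV := □∀x ∃x2 □□Q(x,x2)` -/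
def alphaV : Formula := .box (.all 1 (.ex 6 (.box (.box (atomQ 1 6)))))

/-- `αHs := □∀x □∀y □Hsuc(x,y)` -/
noncomputable def alphaHs (T : TilingInstance) : Formula :=
  .box (.all 1 (.box (.all 2 (.box (Hsuc T 1 2)))))

/-- `αVs := □∀x □∀y □Vsuc(x,y)` -/
noncomputable def alphaVs (T : TilingInstance) : Formula :=
  .box (.all 1 (.box (.all 2 (.box (Vsuc T 1 2)))))

/-- `φH := □∀x □∀y (◇P(x,y) ↔ □P(x,y))` -/
def phiH : Formula :=
  .box (.all 1 (.box (.all 2 (Formula.biimp (.dia (atomP 1 2)) (.box (atomP 1 2))))))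

/-- `φV := □∀x □∀y (◇Q(x,y) ↔ □Q(x,y))` -/
def phiV : Formula :=
  .box (.all 1 (.box (.all 2 (Formula.biimp (.dia (atomQ 1 2)) (.box (atomQ 1 2))))))

/-- `ψ := □∀x □∀y ([∃z'□(Q(x,z') ∧ P(z',y))] → [□∀z(P(x,z) → Q(z,y))])` -/
def psiDiag : Formula :=
  .box (.all 1 (.box (.all 2
    (Formula.imp (.ex 4 (.box (.and (atomQ 1 4) (atomP 4 2))))
      (.box (.all 3 (Formula.imp (atomP 1 3) (atomQ 3 2))))))))

/-- `α_T`: the conjunction of all the encoding formulas -/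
noncomputable def alphaT (T : TilingInstance) : Formula :=
  bigAnd [alpha0 T, alphaH, alphaV, alphaHs T, alphaVs T, phiH, phiV, psiDiag]


/-! ### Auxiliary lemmas -/

section Helpers
variable {M : Model} {w : M.W} {σ : ℕ → M.D}

lemma sat_atom {p : ℕ} {args : List ℕ} :
    M.sat w σ (.atom p args) ↔ args.map σ ∈ M.ρ w p := Iff.rfl
lemma sat_neg {φ : Formula} : M.sat w σ φ.neg ↔ ¬ M.sat w σ φ := Iff.rfl
lemma sat_and {φ ψ : Formula} : M.sat w σ (φ.and ψ) ↔ M.sat w σ φ ∧ M.sat w σ ψ := Iff.rfl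
lemma sat_or {φ ψ : Formula} : M.sat w σ (φ.or ψ) ↔ M.sat w σ φ ∨ M.sat w σ ψ := Iff.rfl
lemma sat_box {φ : Formula} : M.sat w σ φ.box ↔ ∀ v, M.R w v → M.sat v σ φ := Iff.rfl
lemma sat_dia {φ : Formula} : M.sat w σ φ.dia ↔ ∃ v, M.R w v ∧ M.sat v σ φ := Iff.rfl
lemma sat_ex {x : ℕ} {φ : Formula} :
    M.sat w σ (.ex x φ) ↔ ∃ d ∈ M.dom w, M.sat w (Function.update σ x d) φ := Iff.rfl
lemma sat_all {x : ℕ} {φ : Formula} :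
    M.sat w σ (.all x φ) ↔ ∀ d ∈ M.dom w, M.sat w (Function.update σ x d) φ := Iff.rfl

lemma sat_top : M.sat w σ Formula.top := by
  simp only [Formula.top, sat_or, sat_neg]; tauto

@[simp] lemma sat_top_iff : M.sat w σ Formula.top ↔ True := iff_true_intro sat_top

lemma sat_imp {φ ψ : Formula} :
    M.sat w σ (φ.imp ψ) ↔ (M.sat w σ φ → M.sat w σ ψ) := by
  simp only [Formula.imp, sat_or, sat_neg]; tauto

lemma sat_biimp {φ ψ : Formula} :
    M.sat w σ (φ.biimp ψ) ↔ (M.sat w σ φ ↔ M.sat w σ ψ) := by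
  simp only [Formula.biimp, sat_and, sat_imp]; tauto

lemma sat_bigAnd {l : List Formula} :
    M.sat w σ (bigAnd l) ↔ ∀ φ ∈ l, M.sat w σ φ := by
  induction l with
  | nil => simp [bigAnd]
  | cons a l ih => simp only [bigAnd, List.foldr_cons, sat_and] at *; simp [ih]

lemma sat_bigOr {l : List Formula} :
    M.sat w σ (bigOr l) ↔ ∃ φ ∈ l, M.sat w σ φ := by
  induction l with
  | nil => simp only [bigOr, List.foldr_nil, Formula.bot, sat_and, sat_neg]; tauto
  | cons a l ih => simp only [bigOr, List.foldr_cons, sat_or] at *; simp [ih]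

lemma sat_bigAnd_map {α : Type*} {l : List α} {f : α → Formula} :
    M.sat w σ (bigAnd (l.map f)) ↔ ∀ a ∈ l, M.sat w σ (f a) := by
  rw [sat_bigAnd]; simp

lemma sat_bigOr_map {α : Type*} {l : List α} {f : α → Formula} :
    M.sat w σ (bigOr (l.map f)) ↔ ∃ a ∈ l, M.sat w σ (f a) := by
  rw [sat_bigOr]; simp

end Helpers

/-- the element `d` carries exactly the tile `t` at world `w` -/
def Only (M : Model) (w : M.W) {m : ℕ} (t : Fin m) (d : M.D) : Prop :=
  [d] ∈ M.ρ w (2 + (t : ℕ)) ∧ ∀ t' : Fin m, t' ≠ t → [d] ∉ M.ρ w (2 + (t' : ℕ))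

lemma Only.eq {M : Model} {w : M.W} {m : ℕ} {t t' : Fin m} {d : M.D}
    (h : Only M w t d) (h' : Only M w t' d) : t = t' := by
  by_contra hne; exact h'.2 t hne h.1

lemma sat_OnlyT {M : Model} {w : M.W} {σ : ℕ → M.D} {m : ℕ} {t : Fin m} {x : ℕ} :
    M.sat w σ (OnlyT m t x) ↔ Only M w t (σ x) := by
  simp [OnlyT, Only, tileAt, sat_and, sat_atom, sat_neg, sat_bigAnd_map]

lemma sat_alphaH' {M : Model} {w : M.W} {σ : ℕ → M.D} :
    M.sat w σ alphaH ↔ ∀ v, M.R w v → ∀ a ∈ M.dom v, ∃ b ∈ M.dom v,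
      ∀ u1, M.R v u1 → ∀ u2, M.R u1 u2 → [a, b] ∈ M.ρ u2 0 := by
  simp [alphaH, atomP, sat_box, sat_all, sat_ex, sat_atom, Function.update]

lemma sat_alphaV' {M : Model} {w : M.W} {σ : ℕ → M.D} :
    M.sat w σ alphaV ↔ ∀ v, M.R w v → ∀ a ∈ M.dom v, ∃ b ∈ M.dom v,
      ∀ u1, M.R v u1 → ∀ u2, M.R u1 u2 → [a, b] ∈ M.ρ u2 1 := by
  simp [alphaV, atomQ, sat_box, sat_all, sat_ex, sat_atom, Function.update]

lemma sat_alphaHs' {T : TilingInstance} {M : Model} {w : M.W} {σ : ℕ → M.D} :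
    M.sat w σ (alphaHs T) ↔ ∀ v, M.R w v → ∀ a ∈ M.dom v, ∀ u1, M.R v u1 →
      ∀ b ∈ M.dom u1, ∀ u2, M.R u1 u2 → [a, b] ∈ M.ρ u2 0 →
        ∃ t1 t2 : Fin T.numTiles, (t1, t2) ∈ T.H ∧
          [a] ∈ M.ρ u2 (2 + (t1 : ℕ)) ∧ [b] ∈ M.ρ u2 (2 + (t2 : ℕ)) := by
  simp [alphaHs, Hsuc, atomP, tileAt, sat_box, sat_all, sat_imp, sat_atom, sat_and,
    sat_bigOr_map, Function.update, Finset.mem_toList, Prod.exists]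

lemma sat_alphaVs' {T : TilingInstance} {M : Model} {w : M.W} {σ : ℕ → M.D} :
    M.sat w σ (alphaVs T) ↔ ∀ v, M.R w v → ∀ a ∈ M.dom v, ∀ u1, M.R v u1 →
      ∀ b ∈ M.dom u1, ∀ u2, M.R u1 u2 → [a, b] ∈ M.ρ u2 1 →
        ∃ t1 t2 : Fin T.numTiles, (t1, t2) ∈ T.V ∧
          [a] ∈ M.ρ u2 (2 + (t1 : ℕ)) ∧ [b] ∈ M.ρ u2 (2 + (t2 : ℕ)) := by
  simp [alphaVs, Vsuc, atomQ, tileAt, sat_box, sat_all, sat_imp, sat_atom, sat_and,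
    sat_bigOr_map, Function.update, Finset.mem_toList, Prod.exists]

lemma sat_phiH' {M : Model} {w : M.W} {σ : ℕ → M.D} :
    M.sat w σ phiH ↔ ∀ v, M.R w v → ∀ a ∈ M.dom v, ∀ u1, M.R v u1 →
      ∀ b ∈ M.dom u1, ((∃ u2, M.R u1 u2 ∧ [a, b] ∈ M.ρ u2 0) ↔
        (∀ u2, M.R u1 u2 → [a, b] ∈ M.ρ u2 0)) := by
  simp [phiH, atomP, sat_box, sat_all, sat_biimp, sat_dia, sat_atom, Function.update]

lemma sat_phiV' {M : Model} {w : M.W} {σ : ℕ → M.D} :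
    M.sat w σ phiV ↔ ∀ v, M.R w v → ∀ a ∈ M.dom v, ∀ u1, M.R v u1 →
      ∀ b ∈ M.dom u1, ((∃ u2, M.R u1 u2 ∧ [a, b] ∈ M.ρ u2 1) ↔
        (∀ u2, M.R u1 u2 → [a, b] ∈ M.ρ u2 1)) := by
  simp [phiV, atomQ, sat_box, sat_all, sat_biimp, sat_dia, sat_atom, Function.update]

lemma sat_psiDiag' {M : Model} {w : M.W} {σ : ℕ → M.D} :
    M.sat w σ psiDiag ↔ ∀ v, M.R w v → ∀ a ∈ M.dom v, ∀ u1, M.R v u1 →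
      ∀ b ∈ M.dom u1,
        (∃ c ∈ M.dom u1, ∀ u2, M.R u1 u2 → [a, c] ∈ M.ρ u2 1 ∧ [c, b] ∈ M.ρ u2 0) →
        ∀ u2, M.R u1 u2 → ∀ z ∈ M.dom u2, [a, z] ∈ M.ρ u2 0 → [z, b] ∈ M.ρ u2 1 := by
  simp [psiDiag, atomP, atomQ, sat_box, sat_all, sat_imp, sat_ex, sat_atom, sat_and,
    Function.update]

lemma sat_alpha0' {T : TilingInstance} {M : Model} {w : M.W} {σ : ℕ → M.D} :
    M.sat w σ (alpha0 T) ↔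
      ((∃ v, M.R w v ∧ ∃ d ∈ M.dom v, ∀ u1, M.R v u1 → ∀ u2, M.R u1 u2 →
          Only M u2 T.t0 d) ∧
        (∀ v, M.R w v → ∀ a ∈ M.dom v, ∃ t : Fin T.numTiles,
          ∀ u1, M.R v u1 → ∀ u2, M.R u1 u2 → Only M u2 t a) ∧
        M.sat w σ (delta 3)) := by
  simp [alpha0, sat_and, sat_dia, sat_ex, sat_box, sat_all, sat_bigOr_map, sat_OnlyT,
    Function.update]

lemma sat_delta3 {M : Model} {w : M.W} {σ : ℕ → M.D} :
    M.sat w σ (delta 3) ↔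
      (∃ v, M.R w v) ∧ ∀ v, M.R w v → (∃ u, M.R v u) ∧ ∀ u, M.R v u → ∃ u', M.R u u' := by
  simp [delta, sat_and, sat_dia, sat_box]


/-! ### EBBA membership lemmas -/

lemma ebba_top : EBBA Formula.top := .or (.atom 0 []) (.neg (.atom 0 []))
lemma ebba_bot : EBBA Formula.bot := .and (.atom 0 []) (.neg (.atom 0 []))

lemma ebba_imp {φ ψ : Formula} (h1 : EBBA φ) (h2 : EBBA ψ) : EBBA (φ.imp ψ) :=
  .or (.neg h1) h2

lemma ebba_biimp {φ ψ : Formula} (h1 : EBBA φ) (h2 : EBBA ψ) : EBBA (φ.biimp ψ) :=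
  .and (ebba_imp h1 h2) (ebba_imp h2 h1)

lemma ebba_bigAnd {l : List Formula} (h : ∀ φ ∈ l, EBBA φ) : EBBA (bigAnd l) := by
  induction l with
  | nil => exact ebba_top
  | cons a l ih =>
    exact EBBA.and (h a (by simp)) (ih fun φ hφ => h φ (by simp [hφ]))

lemma ebba_bigOr {l : List Formula} (h : ∀ φ ∈ l, EBBA φ) : EBBA (bigOr l) := by
  induction l with
  | nil => exact ebba_bot
  | cons a l ih =>
    exact EBBA.or (h a (by simp)) (ih fun φ hφ => h φ (by simp [hφ]))

lemma ebba_OnlyT {m : ℕ} {t : Fin m} {x : ℕ} : EBBA (OnlyT m t x) := by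
  refine .and (.atom _ _) (ebba_bigAnd ?_)
  intro φ hφ
  simp only [List.mem_map] at hφ
  obtain ⟨t', -, rfl⟩ := hφ
  exact .neg (.atom _ _)

lemma ebba_delta : ∀ n, EBBA (delta n)
  | 0 => ebba_top
  | n + 1 => .and (.dia ebba_top) (.box (ebba_delta n))

lemma ebba_Hsuc {T : TilingInstance} {x y : ℕ} : EBBA (Hsuc T x y) := by
  refine ebba_imp (.atom _ _) (ebba_bigOr ?_)
  intro φ hφ
  simp only [List.mem_map] at hφ
  obtain ⟨p, -, rfl⟩ := hφ
  exact .and (.atom _ _) (.atom _ _)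

lemma ebba_Vsuc {T : TilingInstance} {x y : ℕ} : EBBA (Vsuc T x y) := by
  refine ebba_imp (.atom _ _) (ebba_bigOr ?_)
  intro φ hφ
  simp only [List.mem_map] at hφ
  obtain ⟨p, -, rfl⟩ := hφ
  exact .and (.atom _ _) (.atom _ _)

lemma ebba_alphaT (T : TilingInstance) : EBBA (alphaT T) := by
  refine ebba_bigAnd ?_
  intro φ hφ
  simp only [List.mem_cons, List.not_mem_nil, or_false] at hφ
  rcases hφ with rfl | rfl | rfl | rfl | rfl | rfl | rfl | rfl
  · refine .and (.diaEx (.box (.box ebba_OnlyT))) (.and (.boxAll (ebba_bigOr ?_)) (ebba_delta 3))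
    intro φ hφ
    simp only [List.mem_map] at hφ
    obtain ⟨t, -, rfl⟩ := hφ
    exact .box (.box ebba_OnlyT)
  · exact .boxAll (.exBox (.box (.atom _ _)))
  · exact .boxAll (.exBox (.box (.atom _ _)))
  · exact .boxAll (.boxAll (.box ebba_Hsuc))
  · exact .boxAll (.boxAll (.box ebba_Vsuc))
  · exact .boxAll (.boxAll (ebba_biimp (.dia (.atom _ _)) (.box (.atom _ _))))
  · exact .boxAll (.boxAll (ebba_biimp (.dia (.atom _ _)) (.box (.atom _ _))))
  · exact .boxAll (.boxAll (ebba_imp (.exBox (.and (.atom _ _) (.atom _ _)))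
      (.boxAll (ebba_imp (.atom _ _) (.atom _ _)))))


/-- the one-world model induced by a tiling -/
@[reducible] def tilingModel (T : TilingInstance) (f : ℕ → ℕ → Fin T.numTiles) : Model where
  W := Unit
  D := ℕ × ℕ
  R := fun _ _ => True
  dom := fun _ => Set.univ
  ρ := fun _ n l =>
    if n = 0 then ∃ a : ℕ × ℕ, l = [a, (a.1 + 1, a.2)]
    else if n = 1 then ∃ a : ℕ × ℕ, l = [a, (a.1, a.2 + 1)]
    else ∃ a : ℕ × ℕ, l = [a] ∧ n = 2 + (f a.1 a.2 : ℕ)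

lemma tilingModel_rho0 {T : TilingInstance} {f : ℕ → ℕ → Fin T.numTiles} {w : Unit}
    {a b : ℕ × ℕ} : [a, b] ∈ (tilingModel T f).ρ w 0 ↔ b = (a.1 + 1, a.2) := by
  simp only [tilingModel, Membership.mem, Set.Mem, if_pos rfl]
  constructor
  · rintro ⟨c, hc⟩
    simp only [List.cons.injEq, and_true] at hc
    obtain ⟨rfl, rfl⟩ := hc; rfl
  · rintro rfl; exact ⟨a, rfl⟩

lemma tilingModel_rho1 {T : TilingInstance} {f : ℕ → ℕ → Fin T.numTiles} {w : Unit}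
    {a b : ℕ × ℕ} : [a, b] ∈ (tilingModel T f).ρ w 1 ↔ b = (a.1, a.2 + 1) := by
  simp only [tilingModel, Membership.mem, Set.Mem, if_neg one_ne_zero, if_pos rfl]
  constructor
  · rintro ⟨c, hc⟩
    simp only [List.cons.injEq, and_true] at hc
    obtain ⟨rfl, rfl⟩ := hc; rfl
  · rintro rfl; exact ⟨a, rfl⟩

lemma tilingModel_rhoT {T : TilingInstance} {f : ℕ → ℕ → Fin T.numTiles} {w : Unit}
    {a : ℕ × ℕ} {t : Fin T.numTiles} :
    [a] ∈ (tilingModel T f).ρ w (2 + (t : ℕ)) ↔ t = f a.1 a.2 := by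
  have h2 : ¬ (2 + (t : ℕ) = 0) := by omega
  have h1 : ¬ (2 + (t : ℕ) = 1) := by omega
  simp only [tilingModel, Membership.mem, Set.Mem, if_neg h2, if_neg h1]
  constructor
  · rintro ⟨c, hc, hn⟩
    simp only [List.cons.injEq, and_true] at hc
    subst hc
    exact Fin.val_injective (by omega)
  · rintro rfl; exact ⟨a, rfl, rfl⟩

lemma tilingModel_Only {T : TilingInstance} {f : ℕ → ℕ → Fin T.numTiles} {w : Unit}
    {a : ℕ × ℕ} {t : Fin T.numTiles} :
    Only (tilingModel T f) w t a ↔ t = f a.1 a.2 := by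
  constructor
  · intro h; exact tilingModel_rhoT.mp h.1
  · rintro rfl
    refine ⟨tilingModel_rhoT.mpr rfl, fun t' hne hmem => hne (tilingModel_rhoT.mp hmem)⟩

lemma tiling_to_sat (T : TilingInstance) (f : ℕ → ℕ → Fin T.numTiles)
    (hf : ProperTiling T f) : Satisfiable (alphaT T) := by
  obtain ⟨hf0, hfH, hfV⟩ := hf
  refine ⟨tilingModel T f, ?_, (), fun _ => (0, 0), fun _ => Set.mem_univ _, ?_⟩
  · refine ⟨⟨()⟩, ⟨(0, 0)⟩, (show Countable Unit from inferInstance), (show Countable (ℕ × ℕ) from inferInstance), fun _ => ⟨(0, 0), Set.mem_univ _⟩,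
      fun _ _ _ => subset_rfl, fun _ _ _ _ _ _ => Set.mem_univ _⟩
  · rw [alphaT, sat_bigAnd]
    intro φ hφ
    simp only [List.mem_cons, List.not_mem_nil, or_false] at hφ
    rcases hφ with rfl | rfl | rfl | rfl | rfl | rfl | rfl | rfl
    · rw [sat_alpha0']
      refine ⟨⟨(), trivial, (0, 0), Set.mem_univ _, fun _ _ _ _ => ?_⟩,
        fun _ _ a _ => ⟨f a.1 a.2, fun _ _ _ _ => ?_⟩, ?_⟩
      · exact tilingModel_Only.mpr hf0.symm
      · exact tilingModel_Only.mpr rfl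
      · rw [sat_delta3]
        exact ⟨⟨(), trivial⟩, fun _ _ => ⟨⟨(), trivial⟩, fun _ _ => ⟨(), trivial⟩⟩⟩
    · rw [sat_alphaH']
      intro _ _ a _
      exact ⟨(a.1 + 1, a.2), Set.mem_univ _, fun _ _ _ _ => tilingModel_rho0.mpr rfl⟩
    · rw [sat_alphaV']
      intro _ _ a _
      exact ⟨(a.1, a.2 + 1), Set.mem_univ _, fun _ _ _ _ => tilingModel_rho1.mpr rfl⟩
    · rw [sat_alphaHs']
      intro _ _ a _ _ _ b _ _ _ hab
      obtain rfl := tilingModel_rho0.mp hab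
      exact ⟨f a.1 a.2, f (a.1 + 1) a.2, hfH a.1 a.2,
        tilingModel_rhoT.mpr rfl, tilingModel_rhoT.mpr rfl⟩
    · rw [sat_alphaVs']
      intro _ _ a _ _ _ b _ _ _ hab
      obtain rfl := tilingModel_rho1.mp hab
      exact ⟨f a.1 a.2, f a.1 (a.2 + 1), hfV a.1 a.2,
        tilingModel_rhoT.mpr rfl, tilingModel_rhoT.mpr rfl⟩
    · rw [sat_phiH']
      intro _ _ a _ _ _ b _
      constructor
      · rintro ⟨_, -, h⟩ _ _; exact h
      · intro h; exact ⟨(), trivial, h () trivial⟩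
    · rw [sat_phiV']
      intro _ _ a _ _ _ b _
      constructor
      · rintro ⟨_, -, h⟩ _ _; exact h
      · intro h; exact ⟨(), trivial, h () trivial⟩
    · rw [sat_psiDiag']
      rintro _ _ a _ _ _ b _ ⟨c, -, hc⟩ _ _ z _ haz
      obtain ⟨h1, h2⟩ := hc () trivial
      obtain rfl := tilingModel_rho1.mp h1
      obtain rfl := tilingModel_rho0.mp h2
      obtain rfl := tilingModel_rho0.mp haz
      exact tilingModel_rho1.mpr rfl


lemma sat_to_tiling (T : TilingInstance) (h : Satisfiable (alphaT T)) :
    ∃ f : ℕ → ℕ → Fin T.numTiles, ProperTiling T f := by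
  obtain ⟨M, ⟨-, -, -, -, hne, hinc, -⟩, w, σ, -, hsat⟩ := h
  rw [alphaT, sat_bigAnd] at hsat
  have h0 := sat_alpha0'.mp (hsat (alpha0 T) (by simp))
  have hH := sat_alphaH'.mp (hsat alphaH (by simp))
  have hV := sat_alphaV'.mp (hsat alphaV (by simp))
  have hHs := sat_alphaHs'.mp (hsat (alphaHs T) (by simp))
  have hVs := sat_alphaVs'.mp (hsat (alphaVs T) (by simp))
  have hpV := sat_phiV'.mp (hsat phiV (by simp))
  have hpsi := sat_psiDiag'.mp (hsat psiDiag (by simp))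
  obtain ⟨⟨v, hwv, d00, hd00, hOnly0⟩, hTiles, hΔ⟩ := h0
  rw [sat_delta3] at hΔ
  obtain ⟨⟨u, hvu⟩, hΔ2⟩ := hΔ.2 v hwv
  obtain ⟨u', huu'⟩ := hΔ2 u hvu
  have hvu' : ∀ {a : M.D}, a ∈ M.dom v → a ∈ M.dom u := fun ha => hinc v u hvu ha
  have hvu'' : ∀ {a : M.D}, a ∈ M.dom v → a ∈ M.dom u' := fun ha => hinc u u' huu' (hvu' ha)
  obtain ⟨t_, -⟩ := hTiles v hwv d00 hd00
  have : Nonempty (Fin T.numTiles) := ⟨t_⟩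
  -- choice functions: horizontal successor, vertical successor, tile
  have hHc : ∀ a : M.D, ∃ b : M.D, a ∈ M.dom v →
      b ∈ M.dom v ∧ ∀ u2, M.R u u2 → [a, b] ∈ M.ρ u2 0 := by
    intro a
    by_cases ha : a ∈ M.dom v
    · obtain ⟨b, hb, hP⟩ := hH v hwv a ha
      exact ⟨b, fun _ => ⟨hb, fun u2 h2 => hP u hvu u2 h2⟩⟩
    · exact ⟨a, fun h => absurd h ha⟩
  choose hf hfP using hHc
  have hVc : ∀ a : M.D, ∃ b : M.D, a ∈ M.dom v →
      b ∈ M.dom v ∧ ∀ u2, M.R u u2 → [a, b] ∈ M.ρ u2 1 := by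
    intro a
    by_cases ha : a ∈ M.dom v
    · obtain ⟨b, hb, hQ⟩ := hV v hwv a ha
      exact ⟨b, fun _ => ⟨hb, fun u2 h2 => hQ u hvu u2 h2⟩⟩
    · exact ⟨a, fun h => absurd h ha⟩
  choose gf gfP using hVc
  have hTc : ∀ a : M.D, ∃ t : Fin T.numTiles, a ∈ M.dom v → Only M u' t a := by
    intro a
    by_cases ha : a ∈ M.dom v
    · obtain ⟨t, ht⟩ := hTiles v hwv a ha
      exact ⟨t, fun _ => ht u hvu u' huu'⟩
    · exact ⟨Classical.arbitrary _, fun h => absurd h ha⟩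
  choose tl htl using hTc
  have tile_eq : ∀ {a : M.D} {t : Fin T.numTiles}, a ∈ M.dom v →
      [a] ∈ M.ρ u' (2 + (t : ℕ)) → t = tl a := by
    intro a t ha hmem
    by_contra hne
    exact (htl a ha).2 t hne hmem
  -- the Q-atom is rigid among successors of u
  have upQ : ∀ {a b : M.D}, a ∈ M.dom v → b ∈ M.dom v → [a, b] ∈ M.ρ u' 1 →
      ∀ u2, M.R u u2 → [a, b] ∈ M.ρ u2 1 := by
    intro a b ha hb hab
    exact (hpV v hwv a ha u hvu b (hvu' hb)).mp ⟨u', huu', hab⟩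
  -- the diagonal step
  have diag : ∀ {a c : M.D}, a ∈ M.dom v → c ∈ M.dom v → [a, c] ∈ M.ρ u' 1 →
      [hf a, hf c] ∈ M.ρ u' 1 := by
    intro a c ha hc hac
    exact hpsi v hwv a ha u hvu (hf c) (hvu' (hfP c hc).1)
      ⟨c, hvu' hc, fun u2 h2 => ⟨upQ ha hc hac u2 h2, (hfP c hc).2 u2 h2⟩⟩
      u' huu' (hf a) (hvu'' (hfP a ha).1) ((hfP a ha).2 u' huu')
  -- the grid
  have hgmem : ∀ j, gf^[j] d00 ∈ M.dom v := by
    intro j; induction j with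
    | zero => exact hd00
    | succ j ih => rw [Function.iterate_succ_apply']; exact (gfP _ ih).1
  have hfmem : ∀ (i : ℕ) (b : M.D), b ∈ M.dom v → hf^[i] b ∈ M.dom v := by
    intro i; induction i with
    | zero => exact fun b hb => hb
    | succ i ih =>
      intro b hb; rw [Function.iterate_succ_apply']; exact (hfP _ (ih b hb)).1
  have key : ∀ (i : ℕ) (b : M.D), b ∈ M.dom v →
      [hf^[i] b, hf^[i] (gf b)] ∈ M.ρ u' 1 := by
    intro i; induction i with
    | zero => exact fun b hb => (gfP b hb).2 u' huu'
    | succ i ih =>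
      intro b hb
      rw [Function.iterate_succ_apply' hf i b, Function.iterate_succ_apply' hf i (gf b)]
      exact diag (hfmem i b hb) (hfmem i _ (gfP b hb).1) (ih b hb)
  refine ⟨fun i j => tl (hf^[i] (gf^[j] d00)), ?_, ?_, ?_⟩
  · have h1 : Only M u' T.t0 d00 := hOnly0 u hvu u' huu'
    have h2 : Only M u' (tl d00) d00 := htl d00 hd00
    simpa using h2.eq h1
  · intro i j
    have ha : hf^[i] (gf^[j] d00) ∈ M.dom v := hfmem i _ (hgmem j)
    have hb : hf (hf^[i] (gf^[j] d00)) ∈ M.dom v := (hfP _ ha).1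
    have hP : [hf^[i] (gf^[j] d00), hf (hf^[i] (gf^[j] d00))] ∈ M.ρ u' 0 :=
      (hfP _ ha).2 u' huu'
    obtain ⟨t1, t2, htH, m1, m2⟩ :=
      hHs v hwv _ ha u hvu _ (hvu' hb) u' huu' hP
    simp only [Function.iterate_succ_apply']
    rw [← tile_eq ha m1, ← tile_eq hb m2]
    exact htH
  · intro i j
    have hc : gf^[j] d00 ∈ M.dom v := hgmem j
    have ha : hf^[i] (gf^[j] d00) ∈ M.dom v := hfmem i _ hc
    have hb : hf^[i] (gf (gf^[j] d00)) ∈ M.dom v := hfmem i _ (gfP _ hc).1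
    have hQ : [hf^[i] (gf^[j] d00), hf^[i] (gf (gf^[j] d00))] ∈ M.ρ u' 1 := key i _ hc
    obtain ⟨t1, t2, htV, m1, m2⟩ :=
      hVs v hwv _ ha u hvu _ (hvu' hb) u' huu' hQ
    simp only [Function.iterate_succ_apply']
    rw [← tile_eq ha m1, ← tile_eq hb m2]
    exact htV

/-- For every tiling instance `T`, the encoding formula `α_T`
is in the `EBBA` fragment, and there exists a proper tiling of `T` over `ℕ × ℕ`
iff `α_T` is satisfiable in an increasing domain model. -/
theorem ebba_tiling_encoding (T : TilingInstance) :
    EBBA (alphaT T) ∧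
      ((∃ f : ℕ → ℕ → Fin T.numTiles, ProperTiling T f) ↔ Satisfiable (alphaT T)) := by
  refine ⟨ebba_alphaT T, ?_, sat_to_tiling T⟩
  rintro ⟨f, hf⟩
  exact tiling_to_sat T f hf
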